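/- Let k = k(n) be any sequence of integers with 1 ≤ k(n) ≤ n−1. Then w.h.p. Q^n(k(n)) contains a vertex of degree exactly k(n); consequently, w.h.p. Q^n(k(n)) is not (k(n)+1)-connected. -/

import Mathlib

open scoped Classical
open Filter Finset

noncomputable section

/-- The vertex set of the `n`-dimensional hypercube: `{0,1}^n`. -/
abbrev Vtx (n : ℕ) := Fin n → Bool

/-- The `n`-dimensional hypercube graph `Q^n`: two vertices are adjacent iff they
differ in exactly one coordinate. -/
def cubeGraph (n : ℕ) : SimpleGraph (Vtx n) :=
  SimpleGraph.fromRel (fun u v => hammingDist u v = 1)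

/-- Sample space for the `k`-out model on `Q^n`: each vertex `v` chooses a
`k`-element set of its neighbours (equivalently, `k` incident edges). -/
abbrev KOut (n k : ℕ) :=
  ∀ v : Vtx n, {s : Finset (Vtx n) // s.card = k ∧ ∀ u ∈ s, (cubeGraph n).Adj v u}

/-- The random subgraph `Q^n(k)` produced by an outcome of the `k`-out model:
`u` and `v` are adjacent iff one of them chose the edge between them. -/
def kOutGraph (n k : ℕ) (ω : KOut n k) : SimpleGraph (Vtx n) :=
  SimpleGraph.fromRel (fun u v => v ∈ (ω u).1)

/-- Uniform (counting) probability of an event on a finite sample space. -/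
def prob {Ω : Type*} [Finite Ω] (p : Ω → Prop) : ℝ :=
  (Nat.card {ω : Ω // p ω} : ℝ) / (Nat.card Ω : ℝ)

/-- Number of vertices in the connected component of `v` in `G`. -/
def compSize {V : Type*} (G : SimpleGraph V) (v : V) : ℕ :=
  Nat.card {w : V // G.Reachable v w}

/-- A graph is `ℓ`-connected if it has more than `ℓ` vertices and remains connected
whenever fewer than `ℓ` vertices are removed. -/
def IsLConnected {V : Type*} [Fintype V] (G : SimpleGraph V) (l : ℕ) : Prop :=
  l < Fintype.card V ∧
    ∀ s : Finset V, s.card < l → (G.induce ((↑s : Set V)ᶜ)).Connected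

/-- The degree of `v` in `G`. -/
def deg {V : Type*} (G : SimpleGraph V) (v : V) : ℕ :=
  Nat.card {u : V // G.Adj v u}

variable {n : ℕ}

lemma cube_adj {u v : Vtx n} : (cubeGraph n).Adj u v ↔ hammingDist u v = 1 := by
  rw [cubeGraph, SimpleGraph.fromRel_adj]
  constructor
  · rintro ⟨hne, h | h⟩
    · exact h
    · rwa [hammingDist_comm]
  · intro h
    refine ⟨fun e => ?_, Or.inl h⟩
    subst e; simp [hammingDist_self] at h

/-- flp coordinate `i` -/
def flp (v : Vtx n) (i : Fin n) : Vtx n := Function.update v i (!(v i))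

lemma flp_apply (v : Vtx n) (i j : Fin n) :
    flp v i j = if j = i then !(v i) else v j := by
  simp [flp, Function.update_apply]

lemma dist_flp (v : Vtx n) (i : Fin n) : hammingDist v (flp v i) = 1 := by
  have h : (Finset.univ.filter fun j => v j ≠ flp v i j) = {i} := by
    ext j
    by_cases h : j = i <;> simp [flp_apply, h]
  show (Finset.univ.filter fun j => v j ≠ flp v i j).card = 1
  rw [h]; simp

lemma bool_eq_not {a b : Bool} (h : a ≠ b) : b = !a := by
  revert h; cases a <;> cases b <;> simp

lemma eq_flp_of_dist_one {v u : Vtx n} (h : hammingDist v u = 1) : ∃ i, u = flp v i := by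
  have h' : (Finset.univ.filter fun j => v j ≠ u j).card = 1 := h
  obtain ⟨i, hi⟩ := Finset.card_eq_one.1 h'
  refine ⟨i, funext fun j => ?_⟩
  by_cases hj : j = i
  · subst hj
    have hm : j ∈ Finset.univ.filter fun x => v x ≠ u x := by
      rw [hi]; exact Finset.mem_singleton_self j
    have hv : v j ≠ u j := (Finset.mem_filter.1 hm).2
    rw [flp_apply, if_pos rfl]
    exact bool_eq_not hv
  · have hm : j ∉ Finset.univ.filter fun x => v x ≠ u x := by
      rw [hi]; simpa using hj
    have hv : ¬ (v j ≠ u j) := by simpa using hm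
    rw [flp_apply, if_neg hj]
    exact (not_ne_iff.1 hv).symm

lemma flp_injective (v : Vtx n) : Function.Injective (flp v) := by
  intro i j h
  by_contra hne
  have h1 : flp v i i = !(v i) := by simp [flp_apply]
  have h2 : flp v j i = v i := by rw [flp_apply, if_neg hne]
  rw [h, h2] at h1
  simp at h1

/-- neighbourhood of `v` in the cube. -/
def nbhd (v : Vtx n) : Finset (Vtx n) := Finset.univ.filter fun u => (cubeGraph n).Adj v u

lemma mem_nbhd {v u : Vtx n} : u ∈ nbhd v ↔ (cubeGraph n).Adj v u := by
  simp [nbhd]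

lemma nbhd_eq_image (v : Vtx n) : nbhd v = Finset.image (flp v) Finset.univ := by
  ext u
  simp only [mem_nbhd, cube_adj, Finset.mem_image, Finset.mem_univ, true_and]
  constructor
  · intro h; obtain ⟨i, hi⟩ := eq_flp_of_dist_one h; exact ⟨i, hi.symm⟩
  · rintro ⟨i, rfl⟩; exact dist_flp v i

lemma card_nbhd (v : Vtx n) : (nbhd v).card = n := by
  rw [nbhd_eq_image, Finset.card_image_of_injective _ (flp_injective v)]
  simp

lemma not_adj_self (v : Vtx n) : ¬ (cubeGraph n).Adj v v := (cubeGraph n).irrefl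

lemma adj_symm' {u v : Vtx n} (h : (cubeGraph n).Adj u v) : (cubeGraph n).Adj v u := h.symm

lemma dist_le_two_of_common {v w u : Vtx n} (h1 : (cubeGraph n).Adj v u)
    (h2 : (cubeGraph n).Adj w u) : hammingDist v w ≤ 2 := by
  have := hammingDist_triangle v u w
  rw [cube_adj] at h1
  have h2' : hammingDist u w = 1 := by rw [hammingDist_comm]; exact cube_adj.1 h2
  omega

lemma adj_dist_one {v w : Vtx n} (h : (cubeGraph n).Adj v w) : hammingDist v w = 1 :=
  cube_adj.1 h

/-- ball of radius 2 has at most (n+1)^2 elements -/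
lemma ball_two_le (v : Vtx n) :
    Nat.card {w : Vtx n // hammingDist v w ≤ 2} ≤ (n+1)^2 := by
  classical
  set f : Option (Fin n) × Option (Fin n) → Vtx n :=
    fun p => (p.1.elim (p.2.elim v (flp v)) (flp (p.2.elim v (flp v)))) with hf
  have hsurj : ∀ w : {w : Vtx n // hammingDist v w ≤ 2}, ∃ p, f p = w.1 := by
    rintro ⟨w, hw⟩
    have hcard : (Finset.univ.filter fun j => v j ≠ w j).card ≤ 2 := hw
    interval_cases h : (Finset.univ.filter fun j => v j ≠ w j).card
    · have : hammingDist v w = 0 := h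
      have : v = w := hammingDist_eq_zero.1 this
      exact ⟨(none, none), this⟩
    · have : hammingDist v w = 1 := h
      obtain ⟨i, rfl⟩ := eq_flp_of_dist_one this
      exact ⟨(some i, none), rfl⟩
    · obtain ⟨i, j, hij, hD⟩ := Finset.card_eq_two.1 h
      refine ⟨(some i, some j), ?_⟩
      show flp (flp v j) i = w
      funext x
      have hmem : ∀ y : Fin n, (v y ≠ w y) ↔ (y = i ∨ y = j) := by
        intro y
        constructor
        · intro hy
          have : y ∈ Finset.univ.filter fun j => v j ≠ w j := by simpa using hy
          rw [hD] at this; simpa using this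
        · intro hy
          have : y ∈ ({i, j} : Finset (Fin n)) := by simpa using hy
          rw [← hD] at this; simpa using this
      by_cases hx1 : x = i
      · subst hx1
        have hvx : v x ≠ w x := (hmem x).2 (Or.inl rfl)
        rw [flp_apply, if_pos rfl, flp_apply, if_neg hij]
        exact (bool_eq_not hvx).symm
      · by_cases hx2 : x = j
        · subst hx2
          have hvx : v x ≠ w x := (hmem x).2 (Or.inr rfl)
          rw [flp_apply, if_neg hx1, flp_apply, if_pos rfl]
          exact (bool_eq_not hvx).symm
        · have : ¬ (v x ≠ w x) := by
            intro hc; rcases (hmem x).1 hc with h | h <;> [exact hx1 h; exact hx2 h]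
          rw [flp_apply, if_neg hx1, flp_apply, if_neg hx2]
          exact not_ne_iff.1 this
  set g : {w : Vtx n // hammingDist v w ≤ 2} → Option (Fin n) × Option (Fin n) :=
    fun w => Classical.choose (hsurj w) with hg
  have hginj : Function.Injective g := by
    intro w1 w2 h
    have e1 : f (g w1) = w1.1 := Classical.choose_spec (hsurj w1)
    have e2 : f (g w2) = w2.1 := Classical.choose_spec (hsurj w2)
    rw [h, e2] at e1
    exact Subtype.ext e1.symm
  calc Nat.card {w : Vtx n // hammingDist v w ≤ 2}
      ≤ Nat.card (Option (Fin n) × Option (Fin n)) := Nat.card_le_card_of_injective g hginj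
    _ = (n+1)^2 := by
        rw [Nat.card_eq_fintype_card]
        simp [Fintype.card_prod, Fintype.card_option, sq]



lemma card_pi_pointwise {ι : Type*} [Fintype ι] {C : ι → Type*} [∀ i, Fintype (C i)]
    (P : (∀ i, C i) → Prop) (Q : ∀ i, C i → Prop) (g : ι → ℕ)
    (hPQ : ∀ f, P f ↔ ∀ i, Q i (f i))
    (hg : ∀ i, Nat.card {c : C i // Q i c} = g i) :
    Nat.card {f : ∀ i, C i // P f} = ∏ i, g i := by
  have e1 : {f : ∀ i, C i // P f} ≃ ∀ i, {c // Q i c} :=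
    (Equiv.subtypeEquivRight hPQ).trans (Equiv.subtypePiEquivPi)
  rw [Nat.card_congr e1, Nat.card_pi]
  exact Finset.prod_congr rfl fun i _ => hg i

lemma card_subtype_fiber {Ω σ : Type*} [Fintype Ω] [Fintype σ] (P : Ω → Prop) (g : Ω → σ) :
    Nat.card {ω : Ω // P ω} = ∑ s : σ, Nat.card {ω : Ω // P ω ∧ g ω = s} := by
  have e1 : {ω : Ω // P ω} ≃ Σ s : σ, {x : {ω : Ω // P ω} // g x.1 = s} :=
    (Equiv.sigmaFiberEquiv (fun x : {ω : Ω // P ω} => g x.1)).symm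
  rw [Nat.card_congr e1, Nat.card_eq_fintype_card, Fintype.card_sigma]
  refine Finset.sum_congr rfl fun s _ => ?_
  rw [← Nat.card_eq_fintype_card]
  exact Nat.card_congr (Equiv.subtypeSubtypeEquivSubtypeInter P (fun ω => g ω = s))

lemma prod_three_split {α : Type*} [Fintype α] (E A : Finset α) (hdisj : Disjoint E A)
    (D N : ℕ) (g : α → ℕ)
    (hE : ∀ u ∈ E, g u = 1) (hA : ∀ u ∈ A, g u = D)
    (hrest : ∀ u, u ∉ E → u ∉ A → g u = N) :
    ∏ u, g u = D ^ A.card * N ^ (Fintype.card α - E.card - A.card) := by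
  classical
  have hsub : E ∪ A ⊆ Finset.univ := Finset.subset_univ _
  rw [← Finset.prod_sdiff hsub]
  have h1 : ∏ u ∈ E ∪ A, g u = D ^ A.card := by
    rw [Finset.prod_union hdisj]
    rw [Finset.prod_congr rfl hE, Finset.prod_congr rfl hA]
    simp [Finset.prod_const]
  have h2 : ∏ u ∈ Finset.univ \ (E ∪ A), g u = N ^ (Fintype.card α - E.card - A.card) := by
    have hc : ∀ u ∈ Finset.univ \ (E ∪ A), g u = N := fun u hu => by
      rw [Finset.mem_sdiff, Finset.mem_union] at hu
      exact hrest u (fun h => hu.2 (Or.inl h)) (fun h => hu.2 (Or.inr h))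
    rw [Finset.prod_congr rfl hc, Finset.prod_const, Finset.card_sdiff_of_subset hsub]
    congr 1
    rw [Finset.card_union_of_disjoint hdisj, Finset.card_univ]
    omega
  rw [h1, h2]; ring


abbrev Fv (n k : ℕ) (v : Vtx n) :=
  {s : Finset (Vtx n) // s.card = k ∧ ∀ u ∈ s, (cubeGraph n).Adj v u}

def B (n k : ℕ) (v : Vtx n) (ω : KOut n k) : Prop := ∀ u, v ∈ (ω u).1 → u ∈ (ω v).1

variable {k : ℕ}

lemma card_vtx : Fintype.card (Vtx n) = 2^n := by
  simp [Fintype.card_fun]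

lemma card_Fv (v : Vtx n) : Nat.card (Fv n k v) = n.choose k := by
  have e : Fv n k v ≃ {s // s ∈ (nbhd v).powersetCard k} :=
    Equiv.subtypeEquivRight (by
      intro s
      rw [Finset.mem_powersetCard]
      constructor
      · rintro ⟨h1, h2⟩; exact ⟨fun u hu => mem_nbhd.2 (h2 u hu), h1⟩
      · rintro ⟨h1, h2⟩; exact ⟨h2, fun u hu => mem_nbhd.1 (h1 hu)⟩)
  rw [Nat.card_congr e, Nat.card_eq_fintype_card, Fintype.card_coe,
    Finset.card_powersetCard, card_nbhd]

lemma card_Fv_avoid {v u : Vtx n} (h : (cubeGraph n).Adj u v) :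
    Nat.card {c : Fv n k u // v ∉ c.1} = (n-1).choose k := by
  have e1 : {c : Fv n k u // v ∉ c.1} ≃
      {s : Finset (Vtx n) // (s.card = k ∧ ∀ x ∈ s, (cubeGraph n).Adj u x) ∧ v ∉ s} :=
    Equiv.subtypeSubtypeEquivSubtypeInter
      (fun s : Finset (Vtx n) => s.card = k ∧ ∀ x ∈ s, (cubeGraph n).Adj u x) (fun s => v ∉ s)
  have e2 : {s : Finset (Vtx n) // (s.card = k ∧ ∀ x ∈ s, (cubeGraph n).Adj u x) ∧ v ∉ s} ≃
      {s // s ∈ ((nbhd u).erase v).powersetCard k} :=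
    Equiv.subtypeEquivRight (by
      intro s
      rw [Finset.mem_powersetCard, Finset.subset_erase]
      constructor
      · rintro ⟨⟨h1, h2⟩, h3⟩; exact ⟨⟨fun x hx => mem_nbhd.2 (h2 x hx), h3⟩, h1⟩
      · rintro ⟨⟨h1, h3⟩, h2⟩; exact ⟨⟨h2, fun x hx => mem_nbhd.1 (h1 hx)⟩, h3⟩)
  rw [Nat.card_congr (e1.trans e2), Nat.card_eq_fintype_card, Fintype.card_coe,
    Finset.card_powersetCard, Finset.card_erase_of_mem (mem_nbhd.2 h), card_nbhd]

lemma card_Fv_eq (v : Vtx n) (s : Fv n k v) :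
    Nat.card {c : Fv n k v // c.1 = s.1} = 1 := by
  have e : {c : Fv n k v // c.1 = s.1} ≃ {c : Fv n k v // c = s} :=
    Equiv.subtypeEquivRight (fun c => (Subtype.ext_iff).symm)
  rw [Nat.card_congr e, Nat.card_eq_fintype_card]
  exact Fintype.card_subtype_eq s

lemma card_Fv_triv (u : Vtx n) (Q : Fv n k u → Prop) (hQ : ∀ c, Q c) :
    Nat.card {c : Fv n k u // Q c} = n.choose k := by
  rw [Nat.card_congr (Equiv.subtypeUnivEquiv hQ)]
  exact card_Fv u

lemma sub_mem_nbhd {v : Vtx n} (s : Fv n k v) : s.1 ⊆ nbhd v :=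
  fun u hu => mem_nbhd.2 (s.2.2 u hu)

lemma two_pow_big (hn : 1 ≤ n) : 2 * n ≤ 2 ^ n := by
  have h := Nat.lt_two_pow_self (n := n-1)
  have : 2^n = 2 * 2^(n-1) := by
    rw [← pow_succ']
    congr 1
    omega
  omega


lemma card_B_single (hk1 : 1 ≤ k) (hkn : k < n) (v : Vtx n) :
    Nat.card {ω : KOut n k // B n k v ω}
      = n.choose k ^ (2^n - (n - k)) * (n-1).choose k ^ (n - k) := by
  classical
  rw [card_subtype_fiber (B n k v) (fun ω => ω v)]
  have hterm : ∀ s : Fv n k v,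
      Nat.card {ω : KOut n k // B n k v ω ∧ ω v = s}
        = (n-1).choose k ^ (n - k) * n.choose k ^ (2^n - 1 - (n - k)) := by
    intro s
    have hiff : ∀ ω : KOut n k, (B n k v ω ∧ ω v = s) ↔
        ∀ u, ((u = v → (ω u).1 = s.1) ∧ (u ≠ v → v ∈ (ω u).1 → u ∈ s.1)) := by
      intro ω
      constructor
      · rintro ⟨hB, hs⟩ u
        refine ⟨fun h => by subst h; rw [hs], fun hne hm => ?_⟩
        have := hB u hm
        rwa [hs] at this
      · intro h
        have hv : (ω v).1 = s.1 := (h v).1 rfl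
        refine ⟨fun u hm => ?_, Subtype.ext hv⟩
        by_cases hu : u = v
        · subst hu; exact hm
        · rw [hv]; exact (h u).2 hu hm
    have hcards : ∀ u : Vtx n,
        Nat.card {c : Fv n k u // (u = v → c.1 = s.1) ∧ (u ≠ v → v ∈ c.1 → u ∈ s.1)}
          = (fun u => if u = v then 1 else
              (if (cubeGraph n).Adj v u ∧ u ∉ s.1 then (n-1).choose k else n.choose k)) u := by
      intro u
      dsimp only
      by_cases hu : u = v
      · subst hu
        rw [if_pos rfl]
        have e : {c : Fv n k u // (u = u → c.1 = s.1) ∧ (u ≠ u → u ∈ c.1 → u ∈ s.1)}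
            ≃ {c : Fv n k u // c.1 = s.1} :=
          Equiv.subtypeEquivRight (fun c => by
            constructor
            · exact fun h => h.1 rfl
            · exact fun h => ⟨fun _ => h, fun hne => absurd rfl hne⟩)
        rw [Nat.card_congr e]
        exact card_Fv_eq u s
      · rw [if_neg hu]
        have e0 : {c : Fv n k u // (u = v → c.1 = s.1) ∧ (u ≠ v → v ∈ c.1 → u ∈ s.1)}
            ≃ {c : Fv n k u // v ∈ c.1 → u ∈ s.1} :=
          Equiv.subtypeEquivRight (fun c => by
            constructor
            · exact fun h => h.2 hu
            · exact fun h => ⟨fun he => absurd he hu, fun _ => h⟩)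
        rw [Nat.card_congr e0]
        by_cases hA : (cubeGraph n).Adj v u ∧ u ∉ s.1
        · rw [if_pos hA]
          have e1 : {c : Fv n k u // v ∈ c.1 → u ∈ s.1} ≃ {c : Fv n k u // v ∉ c.1} :=
            Equiv.subtypeEquivRight (fun c => by
              constructor
              · intro h hm; exact hA.2 (h hm)
              · intro h hm; exact absurd hm h)
          rw [Nat.card_congr e1]
          exact card_Fv_avoid hA.1.symm
        · rw [if_neg hA]
          refine card_Fv_triv u _ (fun c => ?_)
          intro hm
          by_cases hadj : (cubeGraph n).Adj v u
          · by_contra hus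
            exact hA ⟨hadj, hus⟩
          · exact absurd (c.2.2 v hm).symm hadj
    rw [card_pi_pointwise _ _ _ hiff hcards]
    rw [prod_three_split {v} (nbhd v \ s.1) ?hdisj ((n-1).choose k) (n.choose k) _ ?hE ?hA ?hrest]
    case hdisj =>
      simp only [Finset.disjoint_singleton_left, Finset.mem_sdiff, mem_nbhd]
      intro h
      exact not_adj_self v h.1
    case hE => intro u hu; rw [Finset.mem_singleton] at hu; rw [if_pos hu]
    case hA =>
      intro u hu
      rw [Finset.mem_sdiff, mem_nbhd] at hu
      have hne : ¬ u = v := fun h => by subst h; exact not_adj_self _ hu.1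
      rw [if_neg hne, if_pos ⟨hu.1, hu.2⟩]
    case hrest =>
      intro u h1 h2
      rw [Finset.mem_singleton] at h1
      rw [Finset.mem_sdiff, mem_nbhd] at h2
      rw [if_neg h1, if_neg (fun h => h2 ⟨h.1, h.2⟩)]
    have hcA : (nbhd v \ s.1).card = n - k := by
      rw [Finset.card_sdiff_of_subset (sub_mem_nbhd s), card_nbhd, s.2.1]
    rw [hcA, Finset.card_singleton, card_vtx]
  rw [Finset.sum_congr rfl (fun s _ => hterm s), Finset.sum_const, Finset.card_univ,
    ← Nat.card_eq_fintype_card, card_Fv, smul_eq_mul]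
  have hj : n - k + 1 ≤ 2^n := by
    have := Nat.lt_two_pow_self (n := n)
    omega
  rw [show (2:ℕ)^n - (n-k) = (2^n - 1 - (n-k)) + 1 by omega]
  ring


lemma card_B_pair (hk1 : 1 ≤ k) (hkn : k < n) {v w : Vtx n} (hd : 2 < hammingDist v w) :
    Nat.card {ω : KOut n k // B n k v ω ∧ B n k w ω}
      = n.choose k ^ (2^n - 2*(n-k)) * (n-1).choose k ^ (2*(n-k)) := by
  classical
  have hvw : v ≠ w := fun h => by subst h; simp [hammingDist_self] at hd
  have hcom : ∀ u, (cubeGraph n).Adj v u → (cubeGraph n).Adj w u → False := fun u h1 h2 => by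
    have := dist_le_two_of_common h1 h2; omega
  have hnvw : ¬ (cubeGraph n).Adj v w := fun h => by have := adj_dist_one h; omega
  have hnwv : ¬ (cubeGraph n).Adj w v := fun h => by
    have := adj_dist_one h; rw [hammingDist_comm] at this; omega
  rw [card_subtype_fiber (fun ω : KOut n k => B n k v ω ∧ B n k w ω) (fun ω => (ω v, ω w))]
  have hterm : ∀ st : Fv n k v × Fv n k w,
      Nat.card {ω : KOut n k // (B n k v ω ∧ B n k w ω) ∧ (ω v, ω w) = st}
        = (n-1).choose k ^ (2*(n - k)) * n.choose k ^ (2^n - 2 - 2*(n - k)) := by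
    rintro ⟨s, t⟩
    have hws : w ∉ s.1 := fun h => hnvw (s.2.2 w h)
    have hvt : v ∉ t.1 := fun h => hnwv (t.2.2 v h)
    have hiff : ∀ ω : KOut n k, ((B n k v ω ∧ B n k w ω) ∧ (ω v, ω w) = (s, t)) ↔
        ∀ u, ((u = v → (ω u).1 = s.1) ∧ (u = w → (ω u).1 = t.1) ∧
          (u ≠ v → v ∈ (ω u).1 → u ∈ s.1) ∧ (u ≠ w → w ∈ (ω u).1 → u ∈ t.1)) := by
      intro ω
      constructor
      · rintro ⟨⟨hBv, hBw⟩, hst⟩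
        have hs : ω v = s := congrArg Prod.fst hst
        have ht : ω w = t := congrArg Prod.snd hst
        intro u
        refine ⟨fun h => by subst h; rw [hs], fun h => by subst h; rw [ht],
          fun hne hm => ?_, fun hne hm => ?_⟩
        · have := hBv u hm; rwa [hs] at this
        · have := hBw u hm; rwa [ht] at this
      · intro h
        have hv : (ω v).1 = s.1 := (h v).1 rfl
        have hw : (ω w).1 = t.1 := (h w).2.1 rfl
        refine ⟨⟨fun u hm => ?_, fun u hm => ?_⟩, ?_⟩
        · by_cases hu : u = v
          · subst hu; exact hm
          · rw [hv]; exact (h u).2.2.1 hu hm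
        · by_cases hu : u = w
          · subst hu; exact hm
          · rw [hw]; exact (h u).2.2.2 hu hm
        · rw [Prod.mk.injEq]; exact ⟨Subtype.ext hv, Subtype.ext hw⟩
    have hcards : ∀ u : Vtx n,
        Nat.card {c : Fv n k u // (u = v → c.1 = s.1) ∧ (u = w → c.1 = t.1) ∧
            (u ≠ v → v ∈ c.1 → u ∈ s.1) ∧ (u ≠ w → w ∈ c.1 → u ∈ t.1)}
          = (fun u => if u = v ∨ u = w then 1 else
              if (cubeGraph n).Adj v u ∧ u ∉ s.1 then (n-1).choose k else
              if (cubeGraph n).Adj w u ∧ u ∉ t.1 then (n-1).choose k else n.choose k) u := by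
      intro u
      dsimp only
      by_cases hu1 : u = v
      · subst hu1
        rw [if_pos (Or.inl rfl)]
        have e : {c : Fv n k u // (u = u → c.1 = s.1) ∧ (u = w → c.1 = t.1) ∧
              (u ≠ u → u ∈ c.1 → u ∈ s.1) ∧ (u ≠ w → w ∈ c.1 → u ∈ t.1)}
            ≃ {c : Fv n k u // c.1 = s.1} :=
          Equiv.subtypeEquivRight (fun c => by
            constructor
            · exact fun h => h.1 rfl
            · intro h1
              refine ⟨fun _ => h1, fun he => absurd he hvw, fun hne => absurd rfl hne,
                fun _ hm => ?_⟩
              rw [h1] at hm; exact absurd hm hws)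
        rw [Nat.card_congr e]
        exact card_Fv_eq u s
      · by_cases hu2 : u = w
        · subst hu2
          rw [if_pos (Or.inr rfl)]
          have e : {c : Fv n k u // (u = v → c.1 = s.1) ∧ (u = u → c.1 = t.1) ∧
                (u ≠ v → v ∈ c.1 → u ∈ s.1) ∧ (u ≠ u → u ∈ c.1 → u ∈ t.1)}
              ≃ {c : Fv n k u // c.1 = t.1} :=
            Equiv.subtypeEquivRight (fun c => by
              constructor
              · exact fun h => h.2.1 rfl
              · intro h1
                refine ⟨fun he => absurd he.symm hvw, fun _ => h1, fun _ hm => ?_,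
                  fun hne => absurd rfl hne⟩
                rw [h1] at hm; exact absurd hm hvt)
          rw [Nat.card_congr e]
          exact card_Fv_eq u t
        · rw [if_neg (not_or.2 ⟨hu1, hu2⟩)]
          have e0 : {c : Fv n k u // (u = v → c.1 = s.1) ∧ (u = w → c.1 = t.1) ∧
                (u ≠ v → v ∈ c.1 → u ∈ s.1) ∧ (u ≠ w → w ∈ c.1 → u ∈ t.1)}
              ≃ {c : Fv n k u // (v ∈ c.1 → u ∈ s.1) ∧ (w ∈ c.1 → u ∈ t.1)} :=
            Equiv.subtypeEquivRight (fun c => by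
              constructor
              · exact fun h => ⟨h.2.2.1 hu1, h.2.2.2 hu2⟩
              · exact fun h => ⟨fun he => absurd he hu1, fun he => absurd he hu2,
                  fun _ => h.1, fun _ => h.2⟩)
          rw [Nat.card_congr e0]
          by_cases hA1 : (cubeGraph n).Adj v u ∧ u ∉ s.1
          · rw [if_pos hA1]
            have e1 : {c : Fv n k u // (v ∈ c.1 → u ∈ s.1) ∧ (w ∈ c.1 → u ∈ t.1)}
                ≃ {c : Fv n k u // v ∉ c.1} :=
              Equiv.subtypeEquivRight (fun c => by
                constructor
                · exact fun h hm => absurd (h.1 hm) hA1.2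
                · exact fun h => ⟨fun hm => absurd hm h,
                    fun hm => absurd ((c.2.2 w hm).symm) (fun h2 => hcom u hA1.1 h2)⟩)
            rw [Nat.card_congr e1]
            exact card_Fv_avoid hA1.1.symm
          · by_cases hA2 : (cubeGraph n).Adj w u ∧ u ∉ t.1
            · rw [if_neg hA1, if_pos hA2]
              have e1 : {c : Fv n k u // (v ∈ c.1 → u ∈ s.1) ∧ (w ∈ c.1 → u ∈ t.1)}
                  ≃ {c : Fv n k u // w ∉ c.1} :=
                Equiv.subtypeEquivRight (fun c => by
                  constructor
                  · exact fun h hm => absurd (h.2 hm) hA2.2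
                  · exact fun h => ⟨fun hm => absurd ((c.2.2 v hm).symm)
                      (fun h2 => hcom u h2 hA2.1), fun hm => absurd hm h⟩)
              rw [Nat.card_congr e1]
              exact card_Fv_avoid hA2.1.symm
            · rw [if_neg hA1, if_neg hA2]
              refine card_Fv_triv u _ (fun c => ⟨fun hm => ?_, fun hm => ?_⟩)
              · by_cases hadj : (cubeGraph n).Adj v u
                · by_contra hus; exact hA1 ⟨hadj, hus⟩
                · exact absurd (c.2.2 v hm).symm hadj
              · by_cases hadj : (cubeGraph n).Adj w u
                · by_contra hut; exact hA2 ⟨hadj, hut⟩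
                · exact absurd (c.2.2 w hm).symm hadj
    rw [card_pi_pointwise _ _ _ hiff hcards]
    have hdisjA : Disjoint (nbhd v \ s.1) (nbhd w \ t.1) := by
      rw [Finset.disjoint_left]
      intro u hu1 hu2
      rw [Finset.mem_sdiff, mem_nbhd] at hu1 hu2
      exact hcom u hu1.1 hu2.1
    rw [prod_three_split {v, w} ((nbhd v \ s.1) ∪ (nbhd w \ t.1)) ?hdisj
      ((n-1).choose k) (n.choose k) _ ?hE ?hA ?hrest]
    case hdisj =>
      rw [Finset.disjoint_left]
      intro u hu hA
      rw [Finset.mem_insert, Finset.mem_singleton] at hu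
      rw [Finset.mem_union, Finset.mem_sdiff, Finset.mem_sdiff, mem_nbhd, mem_nbhd] at hA
      rcases hu with rfl | rfl
      · rcases hA with h | h
        · exact not_adj_self u h.1
        · exact hnwv h.1
      · rcases hA with h | h
        · exact hnvw h.1
        · exact not_adj_self u h.1
    case hE =>
      intro u hu
      rw [Finset.mem_insert, Finset.mem_singleton] at hu
      rw [if_pos hu]
    case hA =>
      intro u hu
      rw [Finset.mem_union, Finset.mem_sdiff, Finset.mem_sdiff, mem_nbhd, mem_nbhd] at hu
      rcases hu with h | h
      · have hne : ¬ (u = v ∨ u = w) := by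
          rintro (rfl | rfl)
          · exact not_adj_self u h.1
          · exact hnvw h.1
        rw [if_neg hne, if_pos ⟨h.1, h.2⟩]
      · have hne : ¬ (u = v ∨ u = w) := by
          rintro (rfl | rfl)
          · exact hnwv h.1
          · exact not_adj_self u h.1
        rw [if_neg hne, if_neg (fun h2 => hcom u h2.1 h.1), if_pos ⟨h.1, h.2⟩]
    case hrest =>
      intro u h1 h2
      rw [Finset.mem_insert, Finset.mem_singleton] at h1
      rw [Finset.mem_union, Finset.mem_sdiff, Finset.mem_sdiff, mem_nbhd, mem_nbhd] at h2
      push_neg at h2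
      rw [if_neg h1, if_neg (fun h => h.2 (h2.1 h.1)), if_neg (fun h => h.2 (h2.2 h.1))]
    have hcA : ((nbhd v \ s.1) ∪ (nbhd w \ t.1)).card = 2*(n - k) := by
      rw [Finset.card_union_of_disjoint hdisjA,
        Finset.card_sdiff_of_subset (sub_mem_nbhd s), Finset.card_sdiff_of_subset (sub_mem_nbhd t),
        card_nbhd, card_nbhd, s.2.1, t.2.1]
      ring
    have hcE : ({v, w} : Finset (Vtx n)).card = 2 := by
      rw [Finset.card_insert_of_notMem (by simpa using hvw), Finset.card_singleton]
    rw [hcA, hcE, card_vtx]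
  rw [Finset.sum_congr rfl (fun st _ => hterm st), Finset.sum_const, Finset.card_univ,
    Fintype.card_prod, ← Nat.card_eq_fintype_card (α := Fv n k v),
    ← Nat.card_eq_fintype_card (α := Fv n k w), card_Fv, card_Fv, smul_eq_mul]
  have hj : 2*(n - k) + 2 ≤ 2^n := by
    have h1 := two_pow_big (by omega : 1 ≤ n)
    omega
  rw [show (2:ℕ)^n - 2*(n-k) = (2^n - 2 - 2*(n-k)) + 2 by omega]
  ring


lemma card_KOut : Nat.card (KOut n k) = n.choose k ^ 2^n := by
  rw [Nat.card_pi, Finset.prod_congr rfl (fun v _ => card_Fv v), Finset.prod_const,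
    Finset.card_univ, card_vtx]

lemma card_B_mono (v w : Vtx n) :
    Nat.card {ω : KOut n k // B n k v ω ∧ B n k w ω} ≤ Nat.card {ω : KOut n k // B n k v ω} :=
  Nat.card_le_card_of_injective (fun x => ⟨x.1, x.2.1⟩)
    (fun a b h => Subtype.ext (by simpa using congrArg Subtype.val h))

lemma deg_eq_filter (G : SimpleGraph (Vtx n)) (v : Vtx n) :
    deg G v = (Finset.univ.filter fun u => G.Adj v u).card := by
  rw [deg, Nat.card_eq_fintype_card, Fintype.card_subtype]

lemma nbr_filter (ω : KOut n k) (v : Vtx n) :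
    (Finset.univ.filter fun u => (kOutGraph n k ω).Adj v u)
      = (ω v).1 ∪ Finset.univ.filter (fun u => v ∈ (ω u).1) := by
  ext u
  simp only [Finset.mem_filter, Finset.mem_univ, true_and, Finset.mem_union, kOutGraph,
    SimpleGraph.fromRel_adj]
  constructor
  · rintro ⟨hne, h | h⟩
    · exact Or.inl h
    · exact Or.inr h
  · rintro (h | h)
    · exact ⟨((ω v).2.2 u h).ne, Or.inl h⟩
    · exact ⟨(((ω u).2.2 v h).ne).symm, Or.inr h⟩

lemma B_iff_deg (ω : KOut n k) (v : Vtx n) :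
    B n k v ω ↔ deg (kOutGraph n k ω) v = k := by
  rw [deg_eq_filter, nbr_filter]
  constructor
  · intro hB
    have h : (ω v).1 ∪ Finset.univ.filter (fun u => v ∈ (ω u).1) = (ω v).1 :=
      Finset.union_eq_left.2 (fun u hu => hB u (Finset.mem_filter.1 hu).2)
    rw [h]
    exact (ω v).2.1
  · intro hdeg u hm
    have hsub : (ω v).1 ⊆ (ω v).1 ∪ Finset.univ.filter (fun u => v ∈ (ω u).1) :=
      Finset.subset_union_left
    have heq := Finset.eq_of_subset_of_card_le hsub (by rw [hdeg, (ω v).2.1])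
    rw [heq]
    exact Finset.mem_union_right _ (Finset.mem_filter.2 ⟨Finset.mem_univ u, hm⟩)

lemma not_lconn (hkn : k < n) {ω : KOut n k} {v : Vtx n}
    (hdeg : deg (kOutGraph n k ω) v = k) : ¬ IsLConnected (kOutGraph n k ω) (k+1) := by
  rintro ⟨-, hconn⟩
  set G := kOutGraph n k ω with hG
  set s : Finset (Vtx n) := Finset.univ.filter (fun u => G.Adj v u) with hs
  have hcard : s.card = k := by rw [hs, ← deg_eq_filter]; exact hdeg
  have h2 := hconn s (by omega)
  have hlt : (insert v s).card < Fintype.card (Vtx n) := by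
    have h3 : (insert v s).card ≤ k + 1 := by
      have := Finset.card_insert_le v s
      omega
    have hn := Nat.lt_two_pow_self (n := n)
    rw [card_vtx]
    omega
  obtain ⟨w, hw⟩ : ∃ w, w ∉ insert v s := by
    by_contra hall
    push_neg at hall
    have h4 : (Finset.univ : Finset (Vtx n)) ⊆ insert v s := fun x _ => hall x
    have := Finset.card_le_card h4
    rw [Finset.card_univ] at this
    omega
  have hvs : v ∉ s := by
    rw [hs]
    simp only [Finset.mem_filter, Finset.mem_univ, true_and]
    exact G.irrefl
  have hwv : w ≠ v := fun h => hw (h ▸ Finset.mem_insert_self v s)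
  have hws : w ∉ s := fun h => hw (Finset.mem_insert_of_mem h)
  have hvmem : v ∈ ((↑s : Set (Vtx n))ᶜ) := by simpa using hvs
  have hwmem : w ∈ ((↑s : Set (Vtx n))ᶜ) := by simpa using hws
  obtain ⟨p⟩ := h2.preconnected ⟨v, hvmem⟩ ⟨w, hwmem⟩
  have key : ∀ (a b : ((↑s : Set (Vtx n))ᶜ : Set (Vtx n)))
      (q : (G.induce ((↑s : Set (Vtx n))ᶜ)).Walk a b), a.1 = v → b.1 = w → False := by
    intro a b q
    induction q with
    | nil => intro h1 h2; exact hwv (by rw [← h2, h1])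
    | @cons x y z h q ih =>
      intro h1 _
      have hadj : G.Adj x.1 y.1 := h
      rw [h1] at hadj
      have hy : y.1 ∈ s := Finset.mem_filter.2 ⟨Finset.mem_univ _, hadj⟩
      exact y.2 hy
  exact key _ _ p rfl rfl

lemma prob_mono {Ω : Type*} [Fintype Ω] {p q : Ω → Prop} (h : ∀ ω, p ω → q ω) :
    prob p ≤ prob q := by
  rw [prob, prob]
  by_cases hΩ : (Nat.card Ω : ℝ) = 0
  · rw [hΩ, div_zero, div_zero]
  · have hpos : (0:ℝ) < Nat.card Ω :=
      lt_of_le_of_ne (Nat.cast_nonneg _) (Ne.symm hΩ)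
    have hle : (Nat.card {ω // p ω} : ℝ) ≤ (Nat.card {ω // q ω} : ℝ) := by
      exact_mod_cast Nat.card_le_card_of_injective
        (fun x : {ω // p ω} => (⟨x.1, h _ x.2⟩ : {ω // q ω}))
        (fun a b hab => Subtype.ext (by simpa using congrArg Subtype.val hab))
    gcongr

lemma prob_le_one {Ω : Type*} [Fintype Ω] (p : Ω → Prop) : prob p ≤ 1 := by
  rw [prob]
  by_cases hΩ : (Nat.card Ω : ℝ) = 0
  · rw [hΩ, div_zero]; norm_num
  · have hpos : (0:ℝ) < Nat.card Ω :=
      lt_of_le_of_ne (Nat.cast_nonneg _) (Ne.symm hΩ)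
    rw [div_le_one hpos]
    exact_mod_cast Nat.card_le_card_of_injective Subtype.val Subtype.val_injective


def Xc (n k : ℕ) (ω : KOut n k) : ℕ := (Finset.univ.filter fun v => B n k v ω).card

lemma sum_X : ∑ ω : KOut n k, Xc n k ω = ∑ v : Vtx n, Nat.card {ω : KOut n k // B n k v ω} := by
  have h1 : ∀ ω : KOut n k, Xc n k ω = ∑ v : Vtx n, if B n k v ω then 1 else 0 := fun ω =>
    Finset.card_filter _ _
  rw [Finset.sum_congr rfl (fun ω _ => h1 ω), Finset.sum_comm]
  refine Finset.sum_congr rfl fun v _ => ?_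
  rw [Nat.card_eq_fintype_card, Fintype.card_subtype, Finset.card_filter]

lemma sum_X2 : ∑ ω : KOut n k, Xc n k ω * Xc n k ω
    = ∑ v : Vtx n, ∑ w : Vtx n, Nat.card {ω : KOut n k // B n k v ω ∧ B n k w ω} := by
  have h1 : ∀ ω : KOut n k, Xc n k ω * Xc n k ω
      = ∑ v : Vtx n, ∑ w : Vtx n, (if B n k v ω ∧ B n k w ω then 1 else 0) := by
    intro ω
    rw [Xc, Finset.card_filter, Finset.sum_mul_sum]
    refine Finset.sum_congr rfl fun v _ => Finset.sum_congr rfl fun w _ => ?_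
    by_cases hv : B n k v ω <;> by_cases hw : B n k w ω <;> simp [hv, hw]
  rw [Finset.sum_congr rfl (fun ω _ => h1 ω), Finset.sum_comm]
  refine Finset.sum_congr rfl fun v _ => ?_
  rw [Finset.sum_comm]
  refine Finset.sum_congr rfl fun w _ => ?_
  rw [Nat.card_eq_fintype_card, Fintype.card_subtype, Finset.card_filter]

lemma sum_pair_bound (hk1 : 1 ≤ k) (hkn : k < n) :
    ∑ v : Vtx n, ∑ w : Vtx n, Nat.card {ω : KOut n k // B n k v ω ∧ B n k w ω}
      ≤ 2^n * ((n+1)^2 * (n.choose k ^ (2^n - (n-k)) * (n-1).choose k ^ (n-k))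
          + 2^n * (n.choose k ^ (2^n - 2*(n-k)) * (n-1).choose k ^ (2*(n-k)))) := by
  set W := n.choose k ^ (2^n - (n-k)) * (n-1).choose k ^ (n-k) with hW
  set U := n.choose k ^ (2^n - 2*(n-k)) * (n-1).choose k ^ (2*(n-k)) with hU
  have hv : ∀ v : Vtx n, ∑ w : Vtx n, Nat.card {ω : KOut n k // B n k v ω ∧ B n k w ω}
      ≤ (n+1)^2 * W + 2^n * U := by
    intro v
    have hle : ∀ w : Vtx n, Nat.card {ω : KOut n k // B n k v ω ∧ B n k w ω}
        ≤ if hammingDist v w ≤ 2 then W else U := by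
      intro w
      by_cases hd : hammingDist v w ≤ 2
      · rw [if_pos hd]
        exact (card_B_mono v w).trans_eq (card_B_single hk1 hkn v)
      · rw [if_neg hd]
        exact le_of_eq (card_B_pair hk1 hkn (by omega))
    have hball : (Finset.univ.filter fun w => hammingDist v w ≤ 2).card ≤ (n+1)^2 := by
      rw [← Fintype.card_subtype, ← Nat.card_eq_fintype_card]
      exact ball_two_le v
    have hTT : (Finset.univ.filter fun w : Vtx n => ¬ hammingDist v w ≤ 2).card ≤ 2^n := by
      refine le_trans (Finset.card_filter_le _ _) ?_
      rw [Finset.card_univ, card_vtx]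
    calc ∑ w : Vtx n, Nat.card {ω : KOut n k // B n k v ω ∧ B n k w ω}
        ≤ ∑ w : Vtx n, (if hammingDist v w ≤ 2 then W else U) :=
          Finset.sum_le_sum (fun w _ => hle w)
      _ = (Finset.univ.filter fun w => hammingDist v w ≤ 2).card * W
          + (Finset.univ.filter fun w : Vtx n => ¬ hammingDist v w ≤ 2).card * U := by
          rw [Finset.sum_ite, Finset.sum_const, Finset.sum_const, smul_eq_mul, smul_eq_mul]
      _ ≤ (n+1)^2 * W + 2^n * U :=
          add_le_add (Nat.mul_le_mul_right W hball) (Nat.mul_le_mul_right U hTT)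
  calc ∑ v : Vtx n, ∑ w : Vtx n, Nat.card {ω : KOut n k // B n k v ω ∧ B n k w ω}
      ≤ ∑ _v : Vtx n, ((n+1)^2 * W + 2^n * U) := Finset.sum_le_sum (fun v _ => hv v)
    _ = 2^n * ((n+1)^2 * W + 2^n * U) := by
        rw [Finset.sum_const, Finset.card_univ, card_vtx, smul_eq_mul]


lemma sum_X_real (hk1 : 1 ≤ k) (hkn : k < n) :
    ∑ ω : KOut n k, (Xc n k ω : ℝ)
      = 2^n * ((n.choose k : ℝ)^(2^n-(n-k)) * (((n-1).choose k : ℝ))^(n-k)) := by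
  rw [← Nat.cast_sum, sum_X, Finset.sum_congr rfl (fun v _ => card_B_single hk1 hkn v),
    Finset.sum_const, Finset.card_univ, card_vtx, smul_eq_mul]
  push_cast
  ring

lemma sum_X2_real (hk1 : 1 ≤ k) (hkn : k < n) :
    ∑ ω : KOut n k, (Xc n k ω : ℝ)^2
      ≤ 2^n * (((n:ℝ)+1)^2 * ((n.choose k : ℝ)^(2^n-(n-k)) * ((n-1).choose k : ℝ)^(n-k))
          + 2^n * ((n.choose k : ℝ)^(2^n-2*(n-k)) * ((n-1).choose k : ℝ)^(2*(n-k)))) := by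
  calc ∑ ω : KOut n k, (Xc n k ω : ℝ)^2
      = ((∑ ω : KOut n k, Xc n k ω * Xc n k ω : ℕ) : ℝ) := by
        rw [Nat.cast_sum]
        exact Finset.sum_congr rfl (fun ω _ => by push_cast; ring)
    _ ≤ ((2^n * ((n+1)^2 * (n.choose k ^ (2^n - (n-k)) * (n-1).choose k ^ (n-k))
          + 2^n * (n.choose k ^ (2^n - 2*(n-k)) * (n-1).choose k ^ (2*(n-k)))) : ℕ) : ℝ) := by
        have h := sum_pair_bound hk1 hkn
        rw [sum_X2]
        exact_mod_cast h
    _ = _ := by push_cast; ring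

lemma prob_bound (hk1 : 1 ≤ k) (hkn : k < n) :
    1 - ((n:ℝ)+1)^2 / 2^n * ((n.choose k : ℝ)^(n-k) / ((n-1).choose k : ℝ)^(n-k))
      ≤ prob (fun ω : KOut n k => ∃ v, B n k v ω) := by
  classical
  have hj1 : 1 ≤ n - k := by omega
  have h2n : 2*n ≤ 2^n := two_pow_big (by omega)
  have hjT : 2*(n-k) + 2 ≤ 2^n := by omega
  set NR : ℝ := (n.choose k : ℝ) with hNR
  set DR : ℝ := ((n-1).choose k : ℝ) with hDR
  have hNpos : 0 < NR := by
    rw [hNR]; exact_mod_cast Nat.choose_pos (le_of_lt hkn)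
  have hDpos : 0 < DR := by
    rw [hDR]; exact_mod_cast Nat.choose_pos (by omega : k ≤ n-1)
  set TR : ℝ := (2:ℝ)^n with hTR
  have hTpos : 0 < TR := by positivity
  set W : ℝ := NR^(2^n-(n-k)) * DR^(n-k) with hW
  set U : ℝ := NR^(2^n-2*(n-k)) * DR^(2*(n-k)) with hU
  have hUpos : 0 < U := by rw [hU]; positivity
  set A : ℕ := Nat.card {ω : KOut n k // ∃ v, B n k v ω} with hA
  set a : ℝ := (A : ℝ) with ha
  have hanneg : 0 ≤ a := Nat.cast_nonneg A
  -- Cauchy–Schwarz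
  have hCS : (∑ ω : KOut n k, (Xc n k ω : ℝ))^2
      ≤ a * ∑ ω : KOut n k, (Xc n k ω : ℝ)^2 := by
    set s := Finset.univ.filter (fun ω : KOut n k => ∃ v, B n k v ω) with hs
    have hzero : ∀ ω ∈ (Finset.univ : Finset (KOut n k)), ω ∉ s → ((Xc n k ω : ℝ)) = 0 := by
      intro ω _ hω
      rw [hs, Finset.mem_filter] at hω
      push_neg at hω
      have h0 : Xc n k ω = 0 := by
        rw [Xc, Finset.card_eq_zero, Finset.filter_eq_empty_iff]
        intro v _
        exact fun hB => (hω (Finset.mem_univ ω)) v hB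
      rw [h0]; norm_num
    have e1 : ∑ ω ∈ s, (Xc n k ω : ℝ) = ∑ ω : KOut n k, (Xc n k ω : ℝ) :=
      Finset.sum_subset (Finset.filter_subset _ _) hzero
    have e2 : ∑ ω ∈ s, (Xc n k ω : ℝ)^2 ≤ ∑ ω : KOut n k, (Xc n k ω : ℝ)^2 :=
      Finset.sum_le_sum_of_subset_of_nonneg (Finset.filter_subset _ _)
        (fun ω _ _ => sq_nonneg _)
    have hcs := Finset.sum_mul_sq_le_sq_mul_sq s (fun _ => (1:ℝ)) (fun ω => (Xc n k ω : ℝ))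
    simp only [one_mul, one_pow] at hcs
    rw [Finset.sum_const, nsmul_eq_mul, mul_one] at hcs
    have hsA : (s.card : ℝ) = a := by
      rw [ha, hA, Nat.card_eq_fintype_card, Fintype.card_subtype, hs]
    calc (∑ ω : KOut n k, (Xc n k ω : ℝ))^2
        = (∑ ω ∈ s, (Xc n k ω : ℝ))^2 := by rw [e1]
      _ ≤ (s.card : ℝ) * ∑ ω ∈ s, (Xc n k ω : ℝ)^2 := hcs
      _ ≤ a * ∑ ω : KOut n k, (Xc n k ω : ℝ)^2 := by
          rw [hsA]
          exact mul_le_mul_of_nonneg_left e2 hanneg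
  have hS1 : ∑ ω : KOut n k, (Xc n k ω : ℝ) = TR * W := by
    rw [sum_X_real hk1 hkn, hW, hTR]
  have hS2 : ∑ ω : KOut n k, (Xc n k ω : ℝ)^2 ≤ TR * (((n:ℝ)+1)^2 * W + TR * U) := by
    have := sum_X2_real hk1 hkn (n := n) (k := k)
    calc ∑ ω : KOut n k, (Xc n k ω : ℝ)^2
        ≤ 2^n * (((n:ℝ)+1)^2 * (NR^(2^n-(n-k)) * DR^(n-k))
          + 2^n * (NR^(2^n-2*(n-k)) * DR^(2*(n-k)))) := this
      _ = TR * (((n:ℝ)+1)^2 * W + TR * U) := by rw [hW, hU, hTR]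
  have hCS' : (TR * W)^2 ≤ a * (TR * (((n:ℝ)+1)^2 * W + TR * U)) := by
    rw [← hS1]
    calc (∑ ω : KOut n k, (Xc n k ω : ℝ))^2
        ≤ a * ∑ ω : KOut n k, (Xc n k ω : ℝ)^2 := hCS
      _ ≤ a * (TR * (((n:ℝ)+1)^2 * W + TR * U)) := mul_le_mul_of_nonneg_left hS2 hanneg
  -- identities
  obtain ⟨m, hm⟩ : ∃ m, 2^n = m + 2*(n-k) := ⟨2^n - 2*(n-k), by omega⟩
  have hexp1 : 2^n - (n-k) = m + (n-k) := by omega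
  have hexp2 : 2^n - 2*(n-k) = m := by omega
  have hWW : W * W = NR^(2^n) * U := by
    rw [hW, hU, hexp1, hexp2, hm]; ring
  have hWD : W * DR^(n-k) = U * NR^(n-k) := by
    rw [hW, hU, hexp1, hexp2]; ring
  have hale : a ≤ NR^(2^n) := by
    rw [ha, hA, hNR]
    have h1 : Nat.card {ω : KOut n k // ∃ v, B n k v ω} ≤ Nat.card (KOut n k) :=
      Nat.card_le_card_of_injective Subtype.val Subtype.val_injective
    rw [card_KOut] at h1
    exact_mod_cast h1
  -- main algebra
  have h5 : (TR*W)^2 = TR * (TR * (NR^(2^n) * U)) := by rw [← hWW]; ring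
  rw [h5, show a * (TR * (((n:ℝ)+1)^2 * W + TR * U))
      = TR * (a * (((n:ℝ)+1)^2 * W + TR * U)) from by ring] at hCS'
  have h6 : TR * (NR^(2^n) * U) ≤ a * (((n:ℝ)+1)^2 * W + TR * U) :=
    le_of_mul_le_mul_left hCS' hTpos
  have h7 := mul_le_mul_of_nonneg_right h6 (le_of_lt (pow_pos hDpos (n-k)))
  have h8 : U * (TR * NR^(2^n) * DR^(n-k))
      ≤ U * (a * (((n:ℝ)+1)^2 * NR^(n-k)) + a * (TR * DR^(n-k))) := by
    calc U * (TR * NR^(2^n) * DR^(n-k))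
        = TR * (NR^(2^n) * U) * DR^(n-k) := by ring
      _ ≤ (a * (((n:ℝ)+1)^2 * W + TR * U)) * DR^(n-k) := h7
      _ = a * (((n:ℝ)+1)^2 * (W * DR^(n-k))) + a * TR * U * DR^(n-k) := by ring
      _ = a * (((n:ℝ)+1)^2 * (U * NR^(n-k))) + a * TR * U * DR^(n-k) := by rw [hWD]
      _ = U * (a * (((n:ℝ)+1)^2 * NR^(n-k)) + a * (TR * DR^(n-k))) := by ring
  have h9 : TR * NR^(2^n) * DR^(n-k)
      ≤ a * (((n:ℝ)+1)^2 * NR^(n-k)) + a * (TR * DR^(n-k)) :=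
    le_of_mul_le_mul_left h8 hUpos
  have key : NR^(2^n) * (TR * DR^(n-k))
      ≤ NR^(2^n) * (((n:ℝ)+1)^2 * NR^(n-k)) + a * (TR * DR^(n-k)) := by
    have h10 : a * (((n:ℝ)+1)^2 * NR^(n-k)) ≤ NR^(2^n) * (((n:ℝ)+1)^2 * NR^(n-k)) :=
      mul_le_mul_of_nonneg_right hale (by positivity)
    nlinarith [h9, h10]
  -- conclude
  have hprob : prob (fun ω : KOut n k => ∃ v, B n k v ω) = a / NR^(2^n) := by
    rw [prob, ha, hA, hNR, card_KOut]
    push_cast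
    ring
  rw [hprob, le_div_iff₀ (by positivity : (0:ℝ) < NR^(2^n))]
  have hTD : (0:ℝ) < TR * DR^(n-k) := by positivity
  refine le_of_mul_le_mul_right ?_ hTD
  have hεm : (((n:ℝ)+1)^2 / 2^n * (NR^(n-k) / DR^(n-k))) * (TR * DR^(n-k))
      = ((n:ℝ)+1)^2 * NR^(n-k) := by
    rw [hTR]
    field_simp
  calc (1 - ((n:ℝ)+1)^2 / 2^n * (NR^(n-k) / DR^(n-k))) * NR^(2^n) * (TR * DR^(n-k))
      = NR^(2^n) * (TR * DR^(n-k))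
        - NR^(2^n) * ((((n:ℝ)+1)^2 / 2^n * (NR^(n-k) / DR^(n-k))) * (TR * DR^(n-k))) := by
        ring
    _ = NR^(2^n) * (TR * DR^(n-k)) - NR^(2^n) * (((n:ℝ)+1)^2 * NR^(n-k)) := by rw [hεm]
    _ ≤ a * (TR * DR^(n-k)) := by linarith [key]


lemma choose_identity (hk1 : 1 ≤ k) (hkn : k < n) :
    (n - k) * n.choose k = n * (n-1).choose k := by
  obtain ⟨m, rfl⟩ : ∃ m, n = m + 1 := ⟨n - 1, by omega⟩
  obtain ⟨l, rfl⟩ : ∃ l, k = l + 1 := ⟨k - 1, by omega⟩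
  have h1 : (m+1) * m.choose l = (m+1).choose (l+1) * (l+1) := Nat.add_one_mul_choose_eq m l
  have h2 : (m+1).choose (l+1) = m.choose l + m.choose (l+1) := Nat.choose_succ_succ m l
  have h3 : (m + 1 - 1).choose (l+1) = m.choose (l+1) := by simp
  rw [h3]
  have hmul : (l+1) * ((m+1).choose (l+1)) + (m+1) * (m.choose (l+1))
      = (m+1) * ((m+1).choose (l+1)) := by
    calc (l+1) * ((m+1).choose (l+1)) + (m+1) * (m.choose (l+1))
        = (m+1).choose (l+1) * (l+1) + (m+1) * (m.choose (l+1)) := by ring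
      _ = (m+1) * m.choose l + (m+1) * (m.choose (l+1)) := by rw [← h1]
      _ = (m+1) * (m.choose l + m.choose (l+1)) := by ring
      _ = (m+1) * ((m+1).choose (l+1)) := by rw [← h2]
  have hsub : (m + 1 - (l + 1)) * ((m+1).choose (l+1))
      = (m+1) * ((m+1).choose (l+1)) - (l+1) * ((m+1).choose (l+1)) := by
    rw [← Nat.sub_mul]
  have hle : (l+1) * ((m+1).choose (l+1)) ≤ (m+1) * ((m+1).choose (l+1)) :=
    Nat.mul_le_mul_right _ (by omega)
  omega

lemma ratio_le_exp (hk1 : 1 ≤ k) (hkn : k < n) :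
    ((n.choose k : ℝ))^(n-k)
      ≤ Real.exp (n / Real.exp 1) * (((n-1).choose k : ℝ))^(n-k) := by
  have hj1 : 1 ≤ n - k := by omega
  have hjpos : (0:ℝ) < ((n - k : ℕ) : ℝ) := by exact_mod_cast (by omega : 0 < n - k)
  have hnpos : (0:ℝ) < (n:ℝ) := by exact_mod_cast (by omega : 0 < n)
  have hDpos : (0:ℝ) < (((n-1).choose k : ℕ) : ℝ) := by
    exact_mod_cast Nat.choose_pos (by omega : k ≤ n-1)
  have hid : ((n - k : ℕ) : ℝ) * (n.choose k : ℝ) = (n:ℝ) * (((n-1).choose k : ℕ) : ℝ) := by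
    exact_mod_cast choose_identity hk1 hkn
  set y : ℝ := (n:ℝ) / ((n - k : ℕ) : ℝ) with hy
  have hypos : 0 < y := by rw [hy]; positivity
  have hNeq : (n.choose k : ℝ) = y * (((n-1).choose k : ℕ) : ℝ) := by
    rw [hy]
    field_simp
    linarith [hid]
  have hlog : Real.log y ≤ y / Real.exp 1 := by
    have h1 : Real.log (y / Real.exp 1) ≤ y / Real.exp 1 - 1 :=
      Real.log_le_sub_one_of_pos (by positivity)
    rw [Real.log_div (ne_of_gt hypos) (Real.exp_ne_zero 1), Real.log_exp] at h1
    linarith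
  have hyj : y^(n-k) ≤ Real.exp ((n:ℝ) / Real.exp 1) := by
    have hpow : y^(n-k) = Real.exp (((n - k : ℕ) : ℝ) * Real.log y) := by
      rw [Real.exp_nat_mul, Real.exp_log hypos]
    rw [hpow]
    apply Real.exp_le_exp.2
    have hm : ((n - k : ℕ) : ℝ) * Real.log y ≤ ((n - k : ℕ) : ℝ) * (y / Real.exp 1) :=
      mul_le_mul_of_nonneg_left hlog (le_of_lt hjpos)
    have heq : ((n - k : ℕ) : ℝ) * (y / Real.exp 1) = (n:ℝ) / Real.exp 1 := by
      rw [hy]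
      field_simp
    linarith
  calc ((n.choose k : ℝ))^(n-k)
      = (y * (((n-1).choose k : ℕ) : ℝ))^(n-k) := by rw [hNeq]
    _ = y^(n-k) * (((n-1).choose k : ℕ) : ℝ)^(n-k) := mul_pow _ _ _
    _ ≤ Real.exp ((n:ℝ) / Real.exp 1) * (((n-1).choose k : ℕ) : ℝ)^(n-k) :=
        mul_le_mul_of_nonneg_right hyj (by positivity)

lemma eps_le_delta (hk1 : 1 ≤ k) (hkn : k < n) :
    ((n:ℝ)+1)^2 / 2^n * ((n.choose k : ℝ)^(n-k) / ((n-1).choose k : ℝ)^(n-k))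
      ≤ ((n:ℝ)+1)^2 * Real.exp (n / Real.exp 1) / 2^n := by
  have hDpos : (0:ℝ) < (((n-1).choose k : ℕ) : ℝ)^(n-k) := by
    have : (0:ℝ) < (((n-1).choose k : ℕ) : ℝ) := by
      exact_mod_cast Nat.choose_pos (by omega : k ≤ n-1)
    positivity
  have hdiv : (n.choose k : ℝ)^(n-k) / ((n-1).choose k : ℝ)^(n-k)
      ≤ Real.exp (n / Real.exp 1) :=
    (div_le_iff₀ hDpos).2 (ratio_le_exp hk1 hkn)
  calc ((n:ℝ)+1)^2 / 2^n * ((n.choose k : ℝ)^(n-k) / ((n-1).choose k : ℝ)^(n-k))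
      ≤ ((n:ℝ)+1)^2 / 2^n * Real.exp (n / Real.exp 1) :=
        mul_le_mul_of_nonneg_left hdiv (by positivity)
    _ = ((n:ℝ)+1)^2 * Real.exp (n / Real.exp 1) / 2^n := by ring

lemma delta_tendsto :
    Filter.Tendsto (fun n : ℕ => ((n:ℝ)+1)^2 * Real.exp (n / Real.exp 1) / 2^n)
      Filter.atTop (nhds 0) := by
  set r : ℝ := Real.exp (Real.exp 1)⁻¹ / 2 with hr
  have hrpos : 0 < r := by rw [hr]; positivity
  have hrlt : r < 1 := by
    rw [hr, div_lt_one (by norm_num : (0:ℝ) < 2)]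
    have he := Real.exp_one_gt_d9
    have hl := Real.log_two_gt_d9
    have h1 : (Real.exp 1)⁻¹ < Real.log 2 := by
      rw [inv_eq_one_div, div_lt_iff₀ (Real.exp_pos 1)]
      nlinarith
    calc Real.exp (Real.exp 1)⁻¹ < Real.exp (Real.log 2) := Real.exp_lt_exp.2 h1
      _ = 2 := Real.exp_log (by norm_num)
  have h0 : Filter.Tendsto (fun m : ℕ => (m:ℝ)^2 * r^m) Filter.atTop (nhds 0) :=
    tendsto_pow_const_mul_const_pow_of_abs_lt_one 2 (by rwa [abs_of_pos hrpos])
  have hshift : Filter.Tendsto (fun n : ℕ => n + 1) Filter.atTop Filter.atTop :=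
    Filter.tendsto_add_atTop_nat 1
  have h1 : Filter.Tendsto (fun n : ℕ => ((n+1:ℕ):ℝ)^2 * r^(n+1)) Filter.atTop (nhds 0) :=
    h0.comp hshift
  have h2 := h1.const_mul (1/r)
  rw [mul_zero] at h2
  refine h2.congr (fun n => ?_)
  have hrn : r^n = Real.exp ((n:ℝ) / Real.exp 1) / 2^n := by
    rw [hr, div_pow, ← Real.exp_nat_mul]
    congr 1
  have hcast : ((n+1:ℕ):ℝ) = (n:ℝ)+1 := by push_cast; ring
  rw [hcast, pow_succ]
  have hr0 : r ≠ 0 := ne_of_gt hrpos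
  calc (1/r) * (((n:ℝ)+1)^2 * (r^n * r)) = ((n:ℝ)+1)^2 * r^n := by
        field_simp
    _ = ((n:ℝ)+1)^2 * (Real.exp ((n:ℝ) / Real.exp 1) / 2^n) := by rw [hrn]
    _ = ((n:ℝ)+1)^2 * Real.exp ((n:ℝ) / Real.exp 1) / 2^n := by ring


/-- For any sequence of integers `k(n)` with `1 ≤ k(n) ≤ n−1`, w.h.p. `Q^n(k(n))`
contains a vertex of degree exactly `k(n)`, and consequently is not
`(k(n)+1)`-connected. -/
theorem stmt_18 (k : ℕ → ℕ)
    (hk : ∀ᶠ n : ℕ in atTop, 1 ≤ k n ∧ k n ≤ n - 1) :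
    Tendsto (fun n : ℕ =>
        prob (fun ω : KOut n (k n) =>
          (∃ v : Vtx n, deg (kOutGraph n (k n) ω) v = k n) ∧
            ¬ IsLConnected (kOutGraph n (k n) ω) (k n + 1)))
      atTop (nhds 1) := by
  set δ : ℕ → ℝ := fun n => ((n:ℝ)+1)^2 * Real.exp (n / Real.exp 1) / 2^n with hδ
  have hg : Tendsto (fun n => 1 - δ n) atTop (nhds 1) := by
    have := delta_tendsto.const_sub 1
    rwa [sub_zero] at this
  refine tendsto_of_tendsto_of_tendsto_of_le_of_le' hg tendsto_const_nhds ?_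
    (Filter.Eventually.of_forall (fun n => prob_le_one _))
  filter_upwards [hk] with n hn
  have hk1 : 1 ≤ k n := hn.1
  have hkn : k n < n := by omega
  have h1 := prob_bound hk1 hkn
  have h2 : prob (fun ω : KOut n (k n) => ∃ v, B n (k n) v ω)
      ≤ prob (fun ω : KOut n (k n) =>
          (∃ v : Vtx n, deg (kOutGraph n (k n) ω) v = k n) ∧
            ¬ IsLConnected (kOutGraph n (k n) ω) (k n + 1)) := by
    refine prob_mono (fun ω hω => ?_)
    obtain ⟨v, hB⟩ := hω
    have hd := (B_iff_deg ω v).1 hB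
    exact ⟨⟨v, hd⟩, not_lconn hkn hd⟩
  have h3 := eps_le_delta hk1 hkn
  simp only [hδ]
  linarith

end
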